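/- Let G be the group of order 2^10 generated by a, b, c with relations: α = [c,b], β = [c,a], γ = [b,a] are central of order 2, a² = α, b⁸ = c⁸ = 1. Then the center of G contains α, β, γ, b², c², every element of G can be written as aⁱ bʲ cᵏ z with z central, and z⁴ = 1 for every central element z. -/

import Mathlib

namespace Stmt2

/-- The commutator `[x,y] = x⁻¹y⁻¹xy` (the convention used in the paper). -/
def pc {H : Type*} [Group H] (x y : H) : H := x⁻¹ * y⁻¹ * x * y

def a : FreeGroup (Fin 3) := .of 0
def b : FreeGroup (Fin 3) := .of 1
def c : FreeGroup (Fin 3) := .of 2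

/-- Relations of the group `G` of order `2^10`: `α = [c,b]`, `β = [c,a]`, `γ = [b,a]`
are central of order 2, `a² = α`, `b⁸ = c⁸ = 1`. -/
def rels : Set (FreeGroup (Fin 3)) :=
  { pc (pc b a) a, pc (pc b a) b, pc (pc b a) c,
    pc (pc c a) a, pc (pc c a) b, pc (pc c a) c,
    pc (pc c b) a, pc (pc c b) b, pc (pc c b) c,
    (pc b a) ^ 2, (pc c a) ^ 2, (pc c b) ^ 2,
    a ^ 2 * (pc c b)⁻¹, b ^ 8, c ^ 8 }

/-- The group `G` of order `2^10`. -/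
abbrev G10 := PresentedGroup rels

/-- The canonical projection. -/
def π : FreeGroup (Fin 3) →* G10 := PresentedGroup.mk rels

/-! ### Generalities -/

lemma commute_of_pc {H : Type*} [Group H] {x y : H} (h : pc x y = 1) : Commute x y := by
  have h2 : x * y = (y * x) * (x⁻¹ * y⁻¹ * x * y) := by group
  rw [show x⁻¹ * y⁻¹ * x * y = pc x y from rfl, h, mul_one] at h2
  exact h2

lemma commute_of_conj {H : Type*} [Group H] {x y : H} (h : x⁻¹ * y * x = y) : Commute x y := by
  have h2 : x * (x⁻¹ * y * x) = y * x := by group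
  rw [h] at h2
  exact h2

lemma left_comm_of_commute {H : Type*} [Group H] {u v : H} (h : Commute u v) (x : H) :
    u * (v * x) = v * (u * x) := by rw [← mul_assoc, h.eq, mul_assoc]

lemma merge3 {H : Type*} [Group H] {A B C : H} (hAB : Commute A B) (hAC : Commute A C)
    (hBC : Commute B C) (i1 j1 k1 i2 j2 k2 : ℤ) :
    (A^i1*B^j1*C^k1)*(A^i2*B^j2*C^k2) = A^(i1+i2)*(B^(j1+j2)*C^(k1+k2)) := by
  have h1 : Commute (C^k1) (A^i2) := (hAC.symm).zpow_zpow _ _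
  have h2 : Commute (B^j1) (A^i2) := (hAB.symm).zpow_zpow _ _
  have h3 : Commute (C^k1) (B^j2) := (hBC.symm).zpow_zpow _ _
  simp only [zpow_add, mul_assoc]
  rw [left_comm_of_commute h1, left_comm_of_commute h2, left_comm_of_commute h3]

lemma zpow_eq_zpow_emod_two {H : Type*} [Group H] {x : H} (h : x ^ (2:ℕ) = 1) (j : ℤ) :
    x ^ j = x ^ (j % 2) := by
  have h2 : x ^ (2:ℤ) = 1 := by
    rw [show (2:ℤ) = ((2:ℕ):ℤ) by norm_num, zpow_natCast, h]
  conv_lhs => rw [← Int.mul_ediv_add_emod j 2]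
  rw [zpow_add, zpow_mul, h2, one_zpow, one_mul]

/-! ### Relations in `G10` -/

lemma relπ {r : FreeGroup (Fin 3)} (h : r ∈ rels) : π r = 1 :=
  (QuotientGroup.eq_one_iff r).mpr (Subgroup.subset_normalClosure h)

lemma map_pc (x y : FreeGroup (Fin 3)) : π (pc x y) = pc (π x) (π y) := by
  simp [pc, map_mul, map_inv]

lemma hγ2 : π (pc b a) ^ 2 = 1 := by rw [← map_pow]; exact relπ (by simp [rels])
lemma hβ2 : π (pc c a) ^ 2 = 1 := by rw [← map_pow]; exact relπ (by simp [rels])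
lemma hα2 : π (pc c b) ^ 2 = 1 := by rw [← map_pow]; exact relπ (by simp [rels])
lemma hB8 : π b ^ 8 = 1 := by rw [← map_pow]; exact relπ (by simp [rels])
lemma hC8 : π c ^ 8 = 1 := by rw [← map_pow]; exact relπ (by simp [rels])
lemma hA2 : π a ^ 2 = π (pc c b) := by
  have h := relπ (show a ^ 2 * (pc c b)⁻¹ ∈ rels by simp [rels])
  rwa [map_mul, map_inv, map_pow, mul_inv_eq_one] at h

/-- conjugation formulas (free identities) -/
lemma cj_ba : (π a)⁻¹ * π b * π a = π b * π (pc b a) := by rw [map_pc]; unfold pc; group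
lemma cj_ca : (π a)⁻¹ * π c * π a = π c * π (pc c a) := by rw [map_pc]; unfold pc; group
lemma cj_cb : (π b)⁻¹ * π c * π b = π c * π (pc c b) := by rw [map_pc]; unfold pc; group
lemma cj_bc : (π c)⁻¹ * π b * π c = π b * (π (pc c b))⁻¹ := by rw [map_pc]; unfold pc; group

lemma mem_center (x : G10) (hA : Commute (π a) x) (hB : Commute (π b) x)
    (hC : Commute (π c) x) : x ∈ Subgroup.center G10 := by
  rw [Subgroup.mem_center_iff]
  intro g
  induction g using PresentedGroup.induction_on with
  | H w =>
    show Commute (π w) x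
    induction w using FreeGroup.induction_on with
    | C1 => simpa using Commute.one_left x
    | of y => fin_cases y; exacts [hA, hB, hC]
    | inv_of y h => exact (h : Commute (π (FreeGroup.of y)) x).inv_left
    | mul y z hy hz => simpa [map_mul] using hy.mul_left hz

lemma mcα : π (pc c b) ∈ Subgroup.center G10 := by
  refine mem_center _ ?_ ?_ ?_ <;>
    exact (commute_of_pc (by rw [← map_pc]; exact relπ (by simp [rels]))).symm

lemma mcβ : π (pc c a) ∈ Subgroup.center G10 := by
  refine mem_center _ ?_ ?_ ?_ <;>
    exact (commute_of_pc (by rw [← map_pc]; exact relπ (by simp [rels]))).symm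

lemma mcγ : π (pc b a) ∈ Subgroup.center G10 := by
  refine mem_center _ ?_ ?_ ?_ <;>
    exact (commute_of_pc (by rw [← map_pc]; exact relπ (by simp [rels]))).symm

lemma comm_of_center {x : G10} (h : x ∈ Subgroup.center G10) (g : G10) : Commute g x :=
  Subgroup.mem_center_iff.mp h g

lemma conj_pow' {H : Type*} [Group H] (x y : H) (n : ℕ) :
    x⁻¹ * y ^ n * x = (x⁻¹ * y * x) ^ n := by
  rw [show x⁻¹ * y * x = x⁻¹ * y * x⁻¹⁻¹ by rw [inv_inv], conj_pow, inv_inv]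

lemma conj_zpow' {H : Type*} [Group H] (x y : H) (n : ℤ) :
    x⁻¹ * y ^ n * x = (x⁻¹ * y * x) ^ n := by
  rw [show x⁻¹ * y * x = x⁻¹ * y * x⁻¹⁻¹ by rw [inv_inv], conj_zpow, inv_inv]

lemma mcB2 : π b ^ 2 ∈ Subgroup.center G10 := by
  refine mem_center _ ?_ ?_ ?_
  · refine commute_of_conj ?_
    rw [conj_pow', cj_ba, (comm_of_center mcγ (π b)).mul_pow, hγ2, mul_one]
  · exact (Commute.refl (π b)).pow_right 2
  · refine commute_of_conj ?_
    rw [conj_pow', cj_bc, (comm_of_center (Subgroup.inv_mem _ mcα) (π b)).mul_pow,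
      inv_pow, hα2, inv_one, mul_one]

lemma mcC2 : π c ^ 2 ∈ Subgroup.center G10 := by
  refine mem_center _ ?_ ?_ ?_
  · refine commute_of_conj ?_
    rw [conj_pow', cj_ca, (comm_of_center mcβ (π c)).mul_pow, hβ2, mul_one]
  · refine commute_of_conj ?_
    rw [conj_pow', cj_cb, (comm_of_center mcα (π c)).mul_pow, hα2, mul_one]
  · exact (Commute.refl (π c)).pow_right 2

/-! ### The subgroup E generated by the three commutators -/

def E : Subgroup G10 := Subgroup.closure {π (pc c b), π (pc c a), π (pc b a)}

lemma hEZ : E ≤ Subgroup.center G10 := by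
  rw [E, Subgroup.closure_le]
  rintro x (rfl | rfl | rfl)
  exacts [mcα, mcβ, mcγ]

instance : E.Normal := by
  constructor
  intro x hx g
  rw [(comm_of_center (hEZ hx) g).eq, mul_assoc, mul_inv_cancel, mul_one]
  exact hx

lemma E_sq : ∀ w ∈ E, w ^ 2 = 1 := by
  intro w hw
  refine Subgroup.closure_induction ?_ ?_ ?_ ?_ hw
  · rintro x (rfl | rfl | rfl)
    exacts [hα2, hβ2, hγ2]
  · simp
  · intro x y hx hy hx2 hy2
    rw [(comm_of_center (hEZ hy) x).mul_pow, hx2, hy2, mul_one]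
  · intro x _ hx2
    rw [inv_pow, hx2, inv_one]

/-! ### Decomposition g = aⁱ bʲ cᵏ w with w ∈ E -/

lemma decomp (g : G10) : ∃ i j k : ℤ, ∃ w ∈ E, g = π a ^ i * π b ^ j * π c ^ k * w := by
  set q : G10 →* G10 ⧸ E := QuotientGroup.mk' E with hq
  have hone : ∀ x : G10, x ∈ E → q x = 1 := fun x hx => (QuotientGroup.eq_one_iff x).mpr hx
  have hBA : Commute (q (π b)) (q (π a)) := by
    have h : q (π (pc b a)) = 1 := hone _ (Subgroup.subset_closure (by simp))
    rw [map_pc] at h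
    refine commute_of_pc ?_
    rw [show pc (q (π b)) (q (π a)) = q (pc (π b) (π a)) by simp [pc, map_mul, map_inv], h]
  have hCA : Commute (q (π c)) (q (π a)) := by
    have h : q (π (pc c a)) = 1 := hone _ (Subgroup.subset_closure (by simp))
    rw [map_pc] at h
    refine commute_of_pc ?_
    rw [show pc (q (π c)) (q (π a)) = q (pc (π c) (π a)) by simp [pc, map_mul, map_inv], h]
  have hCB : Commute (q (π c)) (q (π b)) := by
    have h : q (π (pc c b)) = 1 := hone _ (Subgroup.subset_closure (by simp))
    rw [map_pc] at h
    refine commute_of_pc ?_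
    rw [show pc (q (π c)) (q (π b)) = q (pc (π c) (π b)) by simp [pc, map_mul, map_inv], h]
  obtain ⟨w, rfl⟩ := PresentedGroup.mk_surjective rels g
  have key : ∀ v : FreeGroup (Fin 3), ∃ i j k : ℤ,
      q (π v) = q (π a) ^ i * q (π b) ^ j * q (π c) ^ k := by
    intro v
    induction v using FreeGroup.induction_on with
    | C1 => exact ⟨0, 0, 0, by simp⟩
    | of y =>
      fin_cases y
      · exact ⟨1, 0, 0, by simp only [zpow_one, zpow_zero, mul_one]; rfl⟩
      · exact ⟨0, 1, 0, by simp only [zpow_one, zpow_zero, mul_one, one_mul]; rfl⟩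
      · exact ⟨0, 0, 1, by simp only [zpow_one, zpow_zero, one_mul]; rfl⟩
    | inv_of y _ =>
      fin_cases y
      · exact ⟨-1, 0, 0, by simp only [zpow_neg_one, zpow_zero, mul_one, map_inv]; rfl⟩
      · exact ⟨0, -1, 0, by simp only [zpow_neg_one, zpow_zero, mul_one, one_mul, map_inv]; rfl⟩
      · exact ⟨0, 0, -1, by simp only [zpow_neg_one, zpow_zero, one_mul, map_inv]; rfl⟩
    | mul y z hy hz =>
      obtain ⟨i1, j1, k1, h1⟩ := hy
      obtain ⟨i2, j2, k2, h2⟩ := hz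
      refine ⟨i1 + i2, j1 + j2, k1 + k2, ?_⟩
      rw [map_mul, map_mul, h1, h2, merge3 hBA.symm hCA.symm hCB.symm, ← mul_assoc]
  obtain ⟨i, j, k, hk⟩ := key w
  have heq : q (π a ^ i * π b ^ j * π c ^ k) = q (π w) := by
    rw [map_mul, map_mul, map_zpow, map_zpow, map_zpow, hk]
  obtain ⟨z, hz, hzeq⟩ := (QuotientGroup.mk'_eq_mk' (N := E)).mp heq
  exact ⟨i, j, k, z, hz, hzeq.symm⟩

/-! ### The concrete group Hc, used to detect nontriviality of the commutators -/

@[ext] structure Hc where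
  i : ZMod 2
  j : ZMod 2
  k : ZMod 2
  l : ZMod 2
  m : ZMod 2
  n : ZMod 2
deriving DecidableEq

namespace Hc

instance : Mul Hc := ⟨fun x y => ⟨x.i+y.i, x.j+y.j, x.k+y.k,
  x.l+y.l + y.j*x.k + x.i*y.i, x.m+y.m + y.i*x.k, x.n+y.n + y.i*x.j⟩⟩
instance : One Hc := ⟨⟨0,0,0,0,0,0⟩⟩
instance : Inv Hc := ⟨fun x => ⟨x.i, x.j, x.k, x.l + x.j*x.k + x.i*x.i,
  x.m + x.i*x.k, x.n + x.i*x.j⟩⟩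

lemma mul_def (x y : Hc) : x * y = ⟨x.i+y.i, x.j+y.j, x.k+y.k,
  x.l+y.l + y.j*x.k + x.i*y.i, x.m+y.m + y.i*x.k, x.n+y.n + y.i*x.j⟩ := rfl
lemma one_def : (1 : Hc) = ⟨0,0,0,0,0,0⟩ := rfl

instance : Group Hc where
  mul_assoc x y z := by ext <;> simp only [mul_def] <;> ring
  one_mul x := by ext <;> simp only [mul_def, one_def] <;> ring
  mul_one x := by ext <;> simp only [mul_def, one_def] <;> ring
  inv_mul_cancel x := by
    obtain ⟨i,j,k,l,m,n⟩ := x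
    revert i j k l m n
    decide

end Hc

/-- generator images in `Hc` -/
def fgen : Fin 3 → Hc := ![⟨1,0,0,0,0,0⟩, ⟨0,1,0,0,0,0⟩, ⟨0,0,1,0,0,0⟩]

lemma fgen_rels : ∀ r ∈ rels, FreeGroup.lift fgen r = 1 := by
  intro r hr
  simp only [rels, Set.mem_insert_iff, Set.mem_singleton_iff] at hr
  rcases hr with rfl|rfl|rfl|rfl|rfl|rfl|rfl|rfl|rfl|rfl|rfl|rfl|rfl|rfl|rfl <;>
    · simp only [pc, a, b, c, map_mul, map_inv, map_pow, FreeGroup.lift_apply_of]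
      decide

def φ : G10 →* Hc := PresentedGroup.toGroup fgen_rels

lemma φπ (w : FreeGroup (Fin 3)) : φ (π w) = FreeGroup.lift fgen w := rfl

lemma φγ : φ (π (pc b a)) = ⟨0,0,0,0,0,1⟩ := by
  rw [φπ]; simp only [pc, a, b, map_mul, map_inv, FreeGroup.lift_apply_of]; decide

lemma φβ : φ (π (pc c a)) = ⟨0,0,0,0,1,0⟩ := by
  rw [φπ]; simp only [pc, a, c, map_mul, map_inv, FreeGroup.lift_apply_of]; decide

/-! ### Auxiliary power lemmas -/

lemma pow_zpow_eq_one {H : Type*} [Group H] {x : H} {n : ℕ} (h : x ^ n = 1) (i : ℤ) :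
    (x ^ i) ^ n = 1 := by
  rw [← zpow_natCast (x ^ i) n, ← zpow_mul, mul_comm, zpow_mul, zpow_natCast, h, one_zpow]

lemma zpow_two_eq {H : Type*} [Group H] (x : H) : x ^ (2:ℤ) = x ^ (2:ℕ) := by
  rw [show (2:ℤ) = ((2:ℕ):ℤ) by norm_num, zpow_natCast]

/-! ### Main theorem -/

/-- In the group `G` of order `2^10` above: the center contains `α, β, γ, b², c²`;
every element of `G` has the form `aⁱbʲcᵏz` with `z` central; and `z⁴ = 1` for every
central element `z`. -/
theorem stmt_2 :
    (π (pc c b) ∈ Subgroup.center G10 ∧ π (pc c a) ∈ Subgroup.center G10 ∧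
      π (pc b a) ∈ Subgroup.center G10 ∧ π (b ^ 2) ∈ Subgroup.center G10 ∧
      π (c ^ 2) ∈ Subgroup.center G10) ∧
    (∀ g : G10, ∃ (i j k : ℤ), ∃ z ∈ Subgroup.center G10,
      g = (π a) ^ i * (π b) ^ j * (π c) ^ k * z) ∧
    (∀ z ∈ Subgroup.center G10, z ^ 4 = 1) := by
  refine ⟨⟨mcα, mcβ, mcγ, by rw [map_pow]; exact mcB2, by rw [map_pow]; exact mcC2⟩, ?_, ?_⟩
  · intro g
    obtain ⟨i, j, k, w, hw, hg⟩ := decomp g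
    exact ⟨i, j, k, w, hEZ hw, hg⟩
  · intro z hz
    obtain ⟨i, j, k, w, hw, hg⟩ := decomp z
    have hu : π a ^ i * π b ^ j * π c ^ k ∈ Subgroup.center G10 := by
      have h' : π a ^ i * π b ^ j * π c ^ k = z * w⁻¹ := by rw [hg]; group
      rw [h']
      exact Subgroup.mul_mem _ hz (Subgroup.inv_mem _ (hEZ hw))
    -- the key equation γ^j β^k = 1
    have keyeq : π (pc b a) ^ j * π (pc c a) ^ k = 1 := by
      have hcomm : π a * (π a ^ i * π b ^ j * π c ^ k)
          = (π a ^ i * π b ^ j * π c ^ k) * π a := (comm_of_center hu (π a)).eq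
      have e0 : (π a)⁻¹ * (π a ^ i * π b ^ j * π c ^ k) * π a
          = π a ^ i * π b ^ j * π c ^ k := by
        calc (π a)⁻¹ * (π a ^ i * π b ^ j * π c ^ k) * π a
            = (π a)⁻¹ * ((π a ^ i * π b ^ j * π c ^ k) * π a) := by rw [mul_assoc]
          _ = (π a)⁻¹ * (π a * (π a ^ i * π b ^ j * π c ^ k)) := by rw [← hcomm]
          _ = π a ^ i * π b ^ j * π c ^ k := by group
      have f1 : (π a)⁻¹ * π b ^ j * π a = π b ^ j * π (pc b a) ^ j := by
        rw [conj_zpow', cj_ba, (comm_of_center mcγ (π b)).mul_zpow]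
      have f2 : (π a)⁻¹ * π c ^ k * π a = π c ^ k * π (pc c a) ^ k := by
        rw [conj_zpow', cj_ca, (comm_of_center mcβ (π c)).mul_zpow]
      have hswap : Commute (π (pc b a) ^ j) (π c ^ k) :=
        (comm_of_center (Subgroup.zpow_mem _ mcγ j) (π c ^ k)).symm
      have e1 : (π a)⁻¹ * (π a ^ i * π b ^ j * π c ^ k) * π a
          = π a ^ i * π b ^ j * π c ^ k * (π (pc b a) ^ j * π (pc c a) ^ k) := by
        calc (π a)⁻¹ * (π a ^ i * π b ^ j * π c ^ k) * π a
            = π a ^ i * (((π a)⁻¹ * π b ^ j * π a) * ((π a)⁻¹ * π c ^ k * π a)) := by group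
          _ = π a ^ i * ((π b ^ j * π (pc b a) ^ j) * (π c ^ k * π (pc c a) ^ k)) := by
              rw [f1, f2]
          _ = π a ^ i * π b ^ j * π c ^ k * (π (pc b a) ^ j * π (pc c a) ^ k) := by
              simp only [mul_assoc]
              rw [left_comm_of_commute hswap]
      have := e0.symm.trans e1
      exact left_eq_mul.mp this
    -- push to Hc to see that j and k are even
    have hφ : (⟨0,0,0,0,0,1⟩ : Hc) ^ j * (⟨0,0,0,0,1,0⟩ : Hc) ^ k = 1 := by
      have h' := congrArg φ keyeq
      simpa only [map_mul, map_zpow, map_one, φγ, φβ] using h'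
    rw [zpow_eq_zpow_emod_two (by decide) j, zpow_eq_zpow_emod_two (by decide) k] at hφ
    have hj0 : j % 2 = 0 := by
      rcases Int.emod_two_eq_zero_or_one j with h' | h'
      · exact h'
      · exfalso
        rcases Int.emod_two_eq_zero_or_one k with h'' | h'' <;>
          rw [h', h''] at hφ <;>
          simp only [zpow_one, zpow_zero, mul_one] at hφ <;>
          exact absurd hφ (by decide)
    have hk0 : k % 2 = 0 := by
      rcases Int.emod_two_eq_zero_or_one k with h' | h'
      · exact h'
      · exfalso
        rcases Int.emod_two_eq_zero_or_one j with h'' | h'' <;>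
          rw [h', h''] at hφ <;>
          simp only [zpow_one, zpow_zero, mul_one, one_mul] at hφ <;>
          exact absurd hφ (by decide)
    obtain ⟨j', hj'⟩ := Int.dvd_of_emod_eq_zero hj0
    obtain ⟨k', hk'⟩ := Int.dvd_of_emod_eq_zero hk0
    -- rewrite z = a^i * s with s central
    have hs : (π b ^ (2:ℕ)) ^ j' * ((π c ^ (2:ℕ)) ^ k' * w) ∈ Subgroup.center G10 :=
      Subgroup.mul_mem _ (Subgroup.zpow_mem _ mcB2 j')
        (Subgroup.mul_mem _ (Subgroup.zpow_mem _ mcC2 k') (hEZ hw))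
    have hzs : z = π a ^ i * ((π b ^ (2:ℕ)) ^ j' * ((π c ^ (2:ℕ)) ^ k' * w)) := by
      rw [hg, hj', hk', zpow_mul, zpow_mul, zpow_two_eq (π b), zpow_two_eq (π c)]
      simp only [mul_assoc]
    rw [hzs, (comm_of_center hs (π a ^ i)).mul_pow,
      (comm_of_center (Subgroup.mul_mem _ (Subgroup.zpow_mem _ mcC2 k') (hEZ hw))
        ((π b ^ (2:ℕ)) ^ j')).mul_pow,
      (comm_of_center (hEZ hw) ((π c ^ (2:ℕ)) ^ k')).mul_pow]
    have hA4 : (π a ^ i) ^ 4 = 1 := by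
      refine pow_zpow_eq_one ?_ i
      rw [show (4:ℕ) = 2*2 from rfl, pow_mul, hA2, hα2]
    have hB4 : ((π b ^ (2:ℕ)) ^ j') ^ 4 = 1 := by
      refine pow_zpow_eq_one ?_ j'
      rw [← pow_mul]
      exact hB8
    have hC4 : ((π c ^ (2:ℕ)) ^ k') ^ 4 = 1 := by
      refine pow_zpow_eq_one ?_ k'
      rw [← pow_mul]
      exact hC8
    have hw4 : w ^ 4 = 1 := by
      rw [show (4:ℕ) = 2*2 from rfl, pow_mul, E_sq w hw, one_pow]
    rw [hA4, hB4, hC4, hw4, one_mul, one_mul, one_mul]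

end Stmt2
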